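/- Let C and D be convex subsets of a Banach space X, and let C̃, D̃ denote their weak* closures in X**. Then the minimum distance md(C, D) = inf{‖c − d‖ : c ∈ C, d ∈ D} equals md(C̃, D̃) computed with the norm of X**. -/

import Mathlib

open NormedSpace Pointwise

/-- Lower bounds given by a functional `f` transfer through the weak* closure. -/
lemma stmt11_wk_lb {X : Type*} [NormedAddCommGroup X] [NormedSpace ℝ X]
    (A : Set X) (F : StrongDual ℝ (StrongDual ℝ X))
    (hF : StrongDual.toWeakDual F ∈
      closure (StrongDual.toWeakDual '' ((inclusionInDoubleDual ℝ X) '' A)))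
    (f : StrongDual ℝ X) (β : ℝ) (h : ∀ a ∈ A, β ≤ f a) : β ≤ F f := by
  have hcl : IsClosed {φ : WeakDual ℝ (StrongDual ℝ X) | β ≤ φ f} :=
    IsClosed.preimage (WeakDual.eval_continuous f) isClosed_Ici
  have hsub : StrongDual.toWeakDual '' ((inclusionInDoubleDual ℝ X) '' A)
      ⊆ {φ : WeakDual ℝ (StrongDual ℝ X) | β ≤ φ f} := by
    rintro _ ⟨_, ⟨a, ha, rfl⟩, rfl⟩
    simpa [NormedSpace.dual_def] using h a ha
  exact hcl.closure_subset_iff.mpr hsub hF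

/-- A functional bounded above by `u` on the ball of radius `m` satisfies
`m * |f x| ≤ u * ‖x‖`. -/
lemma stmt11_ball_bound {X : Type*} [NormedAddCommGroup X] [NormedSpace ℝ X] {m u : ℝ}
    (hmpos : 0 < m) (f : StrongDual ℝ X) (hfu : ∀ a ∈ Metric.ball (0:X) m, f a < u) :
    ∀ x : X, m * |f x| ≤ u * ‖x‖ := by
  intro x
  rcases eq_or_ne x 0 with rfl | hx
  · simp
  have hxn : 0 < ‖x‖ := norm_pos_iff.mpr hx
  have key : ∀ r ∈ Set.Ioo (0:ℝ) 1, r * (m * |f x|) ≤ u * ‖x‖ := by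
    rintro r ⟨hr0, hr1⟩
    set y := (r * m / ‖x‖) • x with hy
    have hc : (0:ℝ) < r * m / ‖x‖ := by positivity
    have hyn : ‖y‖ = r * m := by
      rw [hy, norm_smul, Real.norm_eq_abs, abs_of_pos hc, div_mul_cancel₀ _ hxn.ne']
    have hyb : y ∈ Metric.ball (0:X) m := by
      rw [Metric.mem_ball, dist_zero_right, hyn]; nlinarith
    have hyb' : -y ∈ Metric.ball (0:X) m := by
      rw [Metric.mem_ball, dist_zero_right, norm_neg, hyn]; nlinarith
    have h1 := hfu y hyb
    have h2 := hfu (-y) hyb'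
    rw [map_neg] at h2
    have hfy : |f y| ≤ u := abs_le.mpr ⟨by linarith, h1.le⟩
    have hfy2 : f y = (r * m / ‖x‖) * f x := by rw [hy, map_smul, smul_eq_mul]
    rw [hfy2, abs_mul, abs_of_pos hc, div_mul_eq_mul_div, div_le_iff₀ hxn] at hfy
    nlinarith
  have htend : Filter.Tendsto (fun r : ℝ => r * (m * |f x|)) (nhdsWithin 1 (Set.Iio 1))
      (nhds (m * |f x|)) := by
    have hcont : Continuous (fun r : ℝ => r * (m * |f x|)) := by fun_prop
    have h := (hcont.tendsto 1).mono_left (nhdsWithin_le_nhds (s := Set.Iio (1:ℝ)))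
    simpa using h
  refine le_of_tendsto htend ?_
  filter_upwards [Ioo_mem_nhdsLT_of_mem (by constructor <;> norm_num : (1:ℝ) ∈ Set.Ioc 0 1)]
    with r hr using key r hr

/-- For convex subsets `C, D` of a Banach space `X`, the minimum
distance `md(C, D)` equals `md(C̃, D̃)` where `C̃, D̃` are the weak* closures of
(the canonical images of) `C, D` in `X**`. -/
theorem stmt11 {X : Type*} [NormedAddCommGroup X] [NormedSpace ℝ X] [CompleteSpace X]
    (C D : Set X) (hC : Convex ℝ C) (hD : Convex ℝ D)
    (Ct Dt : Set (StrongDual ℝ (StrongDual ℝ X)))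
    (hCt : Ct = {F | StrongDual.toWeakDual F ∈
      closure (StrongDual.toWeakDual '' ((inclusionInDoubleDual ℝ X) '' C))})
    (hDt : Dt = {F | StrongDual.toWeakDual F ∈
      closure (StrongDual.toWeakDual '' ((inclusionInDoubleDual ℝ X) '' D))}) :
    sInf ((fun p : X × X => ‖p.1 - p.2‖) '' C ×ˢ D) =
      sInf ((fun p : StrongDual ℝ (StrongDual ℝ X) × StrongDual ℝ (StrongDual ℝ X) => ‖p.1 - p.2‖) '' Ct ×ˢ Dt) := by
  have hJnorm : ∀ x : X, ‖inclusionInDoubleDual ℝ X x‖ = ‖x‖ := fun x =>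
    (inclusionInDoubleDualLi ℝ (E := X)).norm_map x
  rcases C.eq_empty_or_nonempty with rfl | ⟨c₀, hc₀⟩
  · have h : Ct = ∅ := by simp [hCt]
    simp [h]
  rcases D.eq_empty_or_nonempty with rfl | ⟨d₀, hd₀⟩
  · have h : Dt = ∅ := by simp [hDt]
    simp [h]
  set S₁ := (fun p : X × X => ‖p.1 - p.2‖) '' C ×ˢ D with hS₁
  set S₂ := (fun p : StrongDual ℝ (StrongDual ℝ X) × StrongDual ℝ (StrongDual ℝ X) => ‖p.1 - p.2‖) '' Ct ×ˢ Dt with hS₂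
  have hCsub : ∀ c ∈ C, inclusionInDoubleDual ℝ X c ∈ Ct := fun c hc => by
    rw [hCt]
    show StrongDual.toWeakDual (inclusionInDoubleDual ℝ X c) ∈
      closure (StrongDual.toWeakDual '' ((inclusionInDoubleDual ℝ X) '' C))
    exact subset_closure ⟨_, ⟨c, hc, rfl⟩, rfl⟩
  have hDsub : ∀ d ∈ D, inclusionInDoubleDual ℝ X d ∈ Dt := fun d hd => by
    rw [hDt]
    show StrongDual.toWeakDual (inclusionInDoubleDual ℝ X d) ∈
      closure (StrongDual.toWeakDual '' ((inclusionInDoubleDual ℝ X) '' D))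
    exact subset_closure ⟨_, ⟨d, hd, rfl⟩, rfl⟩
  have hS₁sub : S₁ ⊆ S₂ := by
    rintro _ ⟨⟨c, d⟩, ⟨hc, hd⟩, rfl⟩
    exact ⟨(inclusionInDoubleDual ℝ X c, inclusionInDoubleDual ℝ X d),
      ⟨hCsub c hc, hDsub d hd⟩, by simp only; rw [← (inclusionInDoubleDual ℝ X).map_sub, hJnorm]⟩
  have hS₁ne : S₁.Nonempty := ⟨_, ⟨(c₀, d₀), ⟨hc₀, hd₀⟩, rfl⟩⟩
  have hS₂ne : S₂.Nonempty := hS₁ne.mono hS₁sub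
  have hS₂bdd : BddBelow S₂ := ⟨0, by rintro _ ⟨p, _, rfl⟩; positivity⟩
  have hS₁bdd : BddBelow S₁ := ⟨0, by rintro _ ⟨p, _, rfl⟩; positivity⟩
  refine le_antisymm ?_ (csInf_le_csInf hS₂bdd hS₁ne hS₁sub)
  set m := sInf S₁ with hm
  have hm0 : 0 ≤ m := le_csInf hS₁ne (by rintro _ ⟨p, _, rfl⟩; positivity)
  refine le_csInf hS₂ne ?_
  rintro _ ⟨⟨F, G⟩, ⟨hF, hG⟩, rfl⟩
  rw [hCt] at hF
  rw [hDt] at hG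
  simp only
  rcases eq_or_lt_of_le hm0 with h0 | hmpos
  · rw [← h0]; positivity
  -- separate the ball of radius `m` from `C - D` by a functional
  have hdisj : Disjoint (Metric.ball (0:X) m) (C - D) := by
    rw [Set.disjoint_left]
    rintro x hx ⟨c, hc, d, hd, rfl⟩
    have : m ≤ ‖c - d‖ := csInf_le hS₁bdd ⟨(c, d), ⟨hc, hd⟩, rfl⟩
    rw [Metric.mem_ball, dist_zero_right] at hx
    linarith
  obtain ⟨f, u, hfu, hft⟩ :=
    geometric_hahn_banach_open (convex_ball (0:X) m) Metric.isOpen_ball (hC.sub hD) hdisj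
  have hu0 : 0 < u := by
    have := hfu 0 (Metric.mem_ball_self hmpos)
    simpa using this
  have hf0 : f ≠ 0 := by
    intro hf
    have := hft (c₀ - d₀) (Set.sub_mem_sub hc₀ hd₀)
    rw [hf] at this
    simp at this
    linarith
  have hball := stmt11_ball_bound hmpos f hfu
  have hfpos : 0 < ‖f‖ := norm_pos_iff.mpr hf0
  have hfnorm : m * ‖f‖ ≤ u := by
    have h1 : ‖f‖ ≤ u / m := by
      refine f.opNorm_le_bound (by positivity) fun x => ?_
      rw [Real.norm_eq_abs, div_mul_eq_mul_div, le_div_iff₀ hmpos]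
      nlinarith [hball x]
    rw [le_div_iff₀ hmpos] at h1
    linarith
  -- transfer bounds to the weak* closures
  have hFf : ∀ d ∈ D, u + f d ≤ F f := by
    intro d hd
    refine stmt11_wk_lb C F hF f (u + f d) fun c hc => ?_
    have := hft (c - d) (Set.sub_mem_sub hc hd)
    rw [map_sub] at this
    linarith
  have hGf : u - F f ≤ G (-f) := by
    refine stmt11_wk_lb D G hG (-f) (u - F f) fun d hd => ?_
    have := hFf d hd
    simp only [ContinuousLinearMap.neg_apply]
    linarith
  rw [map_neg] at hGf
  have hsep : u ≤ (F - G) f := by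
    rw [ContinuousLinearMap.sub_apply]
    linarith
  have hle : (F - G) f ≤ ‖F - G‖ * ‖f‖ :=
    le_trans (le_abs_self _) ((F - G).le_opNorm f)
  have hfin : m * ‖f‖ ≤ ‖F - G‖ * ‖f‖ := by linarith
  exact le_of_mul_le_mul_right hfin hfpos
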